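/- arXiv:1202.0190 — 2 statements merged into one kernel-verified Lean document; each statement's English description precedes it below -/
import Mathlib

section
/- For every integer n ≥ 4 and every real z with z ≥ -(1/4)·log n, one has exp(-e^{-z}) - n^{-1/2} ≤ (1 - e^{-z}/n)^n ≤ exp(-e^{-z}). -/
private lemma sq_le_exp' (t : ℝ) (ht : 0 ≤ t) : t ^ 2 ≤ Real.exp t := by
  have h : t / 4 + 1 ≤ Real.exp (t / 4) := Real.add_one_le_exp _
  have h4 : Real.exp t = (Real.exp (t / 4)) ^ 4 := by
    rw [← Real.exp_nat_mul]; congr 1; push_cast; ring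
  have h2 : (1 + t / 4) ^ 4 ≤ (Real.exp (t / 4)) ^ 4 :=
    pow_le_pow_left₀ (by linarith) (by linarith) 4
  have key : t ^ 2 ≤ (1 + t / 4) ^ 4 := by nlinarith [sq_nonneg (t - 4), sq_nonneg t]
  rw [h4]; linarith

theorem one_sub_exp_div_pow_bounds (n : ℕ) (hn : 4 ≤ n) (z : ℝ)
    (hz : -(1 / 4) * Real.log n ≤ z) :
    Real.exp (-Real.exp (-z)) - (n : ℝ) ^ (-(1 / 2 : ℝ)) ≤ (1 - Real.exp (-z) / n) ^ n ∧
      (1 - Real.exp (-z) / n) ^ n ≤ Real.exp (-Real.exp (-z)) := by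
  set t : ℝ := Real.exp (-z) with htdef
  have ht : 0 < t := Real.exp_pos _
  have hn4 : (4 : ℝ) ≤ (n : ℝ) := by exact_mod_cast hn
  have hn0 : (0 : ℝ) < n := by linarith
  have hnne : (n : ℝ) ≠ 0 := ne_of_gt hn0
  -- t ≤ n^(1/4)
  have ht4 : t ≤ (n : ℝ) ^ ((1 : ℝ)/4) := by
    rw [Real.rpow_def_of_pos hn0]
    apply Real.exp_le_exp.mpr
    linarith
  have h1n : (1 : ℝ) ≤ (n : ℝ) := by linarith
  have h14 : (n : ℝ) ^ ((1 : ℝ)/4) ≤ (n : ℝ) ^ ((1 : ℝ)/2) :=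
    Real.rpow_le_rpow_of_exponent_le h1n (by norm_num)
  set s : ℝ := (n : ℝ) ^ ((1 : ℝ)/2) with hsdef
  have hs2 : s ^ 2 = n := by
    rw [hsdef, ← Real.rpow_natCast ((n : ℝ) ^ ((1:ℝ)/2)) 2, ← Real.rpow_mul hn0.le]
    norm_num
  have hs0 : 0 < s := Real.rpow_pos_of_pos hn0 _
  have hsge2 : (2 : ℝ) ≤ s := by nlinarith
  clear_value s
  -- t ≤ n / 2
  have htn2 : t ≤ (n : ℝ) / 2 := by nlinarith
  set x : ℝ := t / n with hxdef
  clear_value x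
  have hx0 : 0 < x := by rw [hxdef]; exact div_pos ht hn0
  have hx2 : x ≤ 1 / 2 := by
    rw [hxdef, div_le_iff₀ hn0]; linarith
  -- upper bound
  have hub : (1 - x) ^ n ≤ Real.exp (-t) := by
    have h1 : 1 - x ≤ Real.exp (-x) := by
      have := Real.add_one_le_exp (-x); linarith
    have h2 : (1 - x) ^ n ≤ (Real.exp (-x)) ^ n :=
      pow_le_pow_left₀ (by linarith) h1 n
    have h3 : (Real.exp (-x)) ^ n = Real.exp (-t) := by
      rw [← Real.exp_nat_mul]
      congr 1
      rw [hxdef]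
      field_simp
    linarith [h2, h3.le]
  -- lower bound
  have hlb : Real.exp (-t) - (n : ℝ) ^ (-(1 / 2 : ℝ)) ≤ (1 - x) ^ n := by
    set a : ℝ := x + 2 * x ^ 2 with hadef
    have hea : 1 + a ≤ Real.exp a := by
      have := Real.add_one_le_exp a; linarith
    have heapos : 0 < Real.exp a := Real.exp_pos _
    have hkey : 1 ≤ (1 - x) * Real.exp a := by nlinarith
    have hmul : Real.exp (-a) * Real.exp a = 1 := by
      rw [← Real.exp_add]; simp
    have hstep1 : Real.exp (-a) ≤ 1 - x := by nlinarith
    have hstep2 : (Real.exp (-a)) ^ n ≤ (1 - x) ^ n :=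
      pow_le_pow_left₀ (Real.exp_pos _).le hstep1 n
    have hstep3 : (Real.exp (-a)) ^ n = Real.exp (-t - 2 * t ^ 2 / n) := by
      rw [← Real.exp_nat_mul]
      congr 1
      rw [hadef, hxdef]
      field_simp
      ring
    have hu : Real.exp (-t - 2 * t ^ 2 / n)
        = Real.exp (-t) * Real.exp (-(2 * t ^ 2 / n)) := by
      rw [← Real.exp_add]; ring_nf
    have hexpu : 1 - 2 * t ^ 2 / n ≤ Real.exp (-(2 * t ^ 2 / n)) := by
      have := Real.add_one_le_exp (-(2 * t ^ 2 / n)); linarith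
    have hetpos : 0 < Real.exp (-t) := Real.exp_pos _
    have hstep4 : Real.exp (-t) - 2 * t ^ 2 / n * Real.exp (-t)
        ≤ Real.exp (-t - 2 * t ^ 2 / n) := by
      rw [hu]
      have he : Real.exp (-t) - 2 * t ^ 2 / n * Real.exp (-t)
          = Real.exp (-t) * (1 - 2 * t ^ 2 / n) := by ring
      rw [he]
      exact mul_le_mul_of_nonneg_left hexpu hetpos.le
    -- t^2 * exp(-t) ≤ 1
    have htsq : t ^ 2 * Real.exp (-t) ≤ 1 := by
      have h1 := sq_le_exp' t ht.le
      have h2 : Real.exp t * Real.exp (-t) = 1 := by rw [← Real.exp_add]; simp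
      have h3 := mul_le_mul_of_nonneg_right h1 hetpos.le
      linarith
    have hfrac : 2 * t ^ 2 / n * Real.exp (-t) ≤ 2 / (n : ℝ) := by
      calc 2 * t ^ 2 / n * Real.exp (-t)
          = 2 / (n : ℝ) * (t ^ 2 * Real.exp (-t)) := by ring
        _ ≤ 2 / (n : ℝ) * 1 := mul_le_mul_of_nonneg_left htsq (by positivity)
        _ = 2 / (n : ℝ) := by ring
    have hhalf : (n : ℝ) ^ (-(1 / 2 : ℝ)) = s⁻¹ := by
      rw [hsdef, ← Real.rpow_neg_one, ← Real.rpow_mul hn0.le]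
      norm_num
    have hlast : 2 / (n : ℝ) ≤ (n : ℝ) ^ (-(1 / 2 : ℝ)) := by
      rw [hhalf, inv_eq_one_div, div_le_div_iff₀ hn0 hs0]
      have h2s : 2 * s ≤ s * s := mul_le_mul_of_nonneg_right hsge2 hs0.le
      have hss : s * s = (n : ℝ) := by rw [← pow_two]; exact hs2
      linarith
    linarith
  exact ⟨hlb, hub⟩
end

section
/- Let λ > 0 and 0 < r < e^{-1} satisfy Σ_{i≥2} r^{i-1}(e^i - 1) ≤ 1/4. Let N be a Poisson random variable with mean λ, and let (N_i)_{i≥2} be independent Poisson random variables, independent of N, such that the mean of N_i is at most λ·r^{i-1}. Then P[Σ_{i≥2} i·N_i ≤ N] ≥ 1 - e^{-λ/8} - e^{-λ/4}. -/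
open MeasureTheory ProbabilityTheory

lemma exp_tsum' (x : ℝ) : ∑' n : ℕ, x ^ n / n.factorial = Real.exp x := by
  rw [Real.exp_eq_exp_ℝ, NormedSpace.exp_eq_tsum_div]

lemma poisson_lintegral {Ω : Type*} [MeasurableSpace Ω] (P : Measure Ω)
    (M : Ω → ℕ) (hM : Measurable M) (μ c : ℝ) (hμ : 0 ≤ μ) (hc : 0 ≤ c)
    (hp : ∀ k : ℕ, P {ω | M ω = k} =
      ENNReal.ofReal (Real.exp (-μ) * μ ^ k / (Nat.factorial k))) :
    ∫⁻ ω, ENNReal.ofReal (c ^ M ω) ∂P = ENNReal.ofReal (Real.exp (μ * (c - 1))) := by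
  have h1 : ∫⁻ ω, ENNReal.ofReal (c ^ M ω) ∂P
      = ∫⁻ k, ENNReal.ofReal (c ^ k) ∂(P.map M) := by
    rw [lintegral_map measurable_from_nat hM]
  rw [h1, lintegral_countable']
  have h2 : ∀ k : ℕ, (P.map M) {k}
      = ENNReal.ofReal (Real.exp (-μ) * μ ^ k / k.factorial) := by
    intro k
    rw [Measure.map_apply hM (measurableSet_singleton k)]
    rw [← hp k]
    rfl
  have hsum : Summable (fun k : ℕ => c ^ k * (Real.exp (-μ) * μ ^ k / k.factorial)) := by
    have h := (Real.summable_pow_div_factorial (c * μ)).mul_left (Real.exp (-μ))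
    refine h.congr fun k => ?_
    rw [mul_pow]; ring
  calc ∑' k : ℕ, ENNReal.ofReal (c ^ k) * (P.map M) {k}
      = ∑' k : ℕ, ENNReal.ofReal (c ^ k * (Real.exp (-μ) * μ ^ k / k.factorial)) := by
        refine tsum_congr fun k => ?_
        rw [h2 k, ← ENNReal.ofReal_mul (by positivity)]
    _ = ENNReal.ofReal (∑' k : ℕ, c ^ k * (Real.exp (-μ) * μ ^ k / k.factorial)) :=
        (ENNReal.ofReal_tsum_of_nonneg (fun k => by positivity) hsum).symm
    _ = ENNReal.ofReal (Real.exp (μ * (c - 1))) := by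
        congr 1
        have he : ∀ k : ℕ, c ^ k * (Real.exp (-μ) * μ ^ k / k.factorial)
            = Real.exp (-μ) * ((c * μ) ^ k / k.factorial) := fun k => by rw [mul_pow]; ring
        rw [tsum_congr he, tsum_mul_left, exp_tsum', ← Real.exp_add]
        congr 1; ring

lemma poisson_integrable {Ω : Type*} [MeasurableSpace Ω] (P : Measure Ω)
    (M : Ω → ℕ) (hM : Measurable M) (μ c : ℝ) (hμ : 0 ≤ μ) (hc : 0 ≤ c)
    (hp : ∀ k : ℕ, P {ω | M ω = k} =
      ENNReal.ofReal (Real.exp (-μ) * μ ^ k / (Nat.factorial k))) :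
    Integrable (fun ω => c ^ M ω) P := by
  refine ⟨((measurable_from_nat (f := fun k : ℕ => c ^ k)).comp hM).aestronglyMeasurable, ?_⟩
  rw [hasFiniteIntegral_iff_ofReal (Filter.Eventually.of_forall fun ω => by positivity)]
  rw [poisson_lintegral P M hM μ c hμ hc hp]
  exact ENNReal.ofReal_lt_top

lemma poisson_integral {Ω : Type*} [MeasurableSpace Ω] (P : Measure Ω)
    (M : Ω → ℕ) (hM : Measurable M) (μ c : ℝ) (hμ : 0 ≤ μ) (hc : 0 ≤ c)
    (hp : ∀ k : ℕ, P {ω | M ω = k} =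
      ENNReal.ofReal (Real.exp (-μ) * μ ^ k / (Nat.factorial k))) :
    ∫ ω, c ^ M ω ∂P = Real.exp (μ * (c - 1)) := by
  have hmeas : AEStronglyMeasurable (fun ω => c ^ M ω) P :=
    ((measurable_from_nat (f := fun k : ℕ => c ^ k)).comp hM).aestronglyMeasurable
  rw [integral_eq_lintegral_of_nonneg_ae
      (Filter.Eventually.of_forall fun ω => by positivity) hmeas,
    poisson_lintegral P M hM μ c hμ hc hp, ENNReal.toReal_ofReal (Real.exp_nonneg _)]

lemma iIndepFun_of_option {Ω : Type*} [MeasurableSpace Ω] {P : Measure Ω}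
    {f : Option ℕ → Ω → ℕ}
    (h : iIndepFun f P) :
    iIndepFun (fun j => f (some j)) P := by
  rw [iIndepFun_iff_measure_inter_preimage_eq_mul] at h ⊢
  intro S sets hsets
  have key := h (S.image some) (sets := fun o => o.elim Set.univ sets) ?_
  · rw [Finset.prod_image (fun x _ y _ hxy => Option.some_injective ℕ hxy)] at key
    have hset : (⋂ o ∈ S.image some, f o ⁻¹' (o.elim Set.univ sets))
        = ⋂ j ∈ S, f (some j) ⁻¹' sets j := by
      ext ω
      simp only [Set.mem_iInter, Finset.mem_image]
      constructor
      · intro hmem j hj; exact hmem (some j) ⟨j, hj, rfl⟩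
      · rintro hmem o ⟨j, hj, rfl⟩; exact hmem j hj
    rw [hset] at key
    exact key
  · intro o _
    cases o with
    | none => exact MeasurableSet.univ
    | some j => exact MeasurableSet.of_discrete

/-- `N_i` for `i ≥ 2` is represented by `Ns (i - 2)`, i.e. `Ns j` stands for `N_{j+2}`. -/
theorem sum_small_poissons_le_poisson
    {Ω : Type*} [MeasurableSpace Ω] (P : Measure Ω) [IsProbabilityMeasure P]
    (l r : ℝ) (hl : 0 < l) (hr0 : 0 < r) (hr1 : r < Real.exp (-1))
    (hrsum : ∑' j : ℕ, r ^ (j + 1) * (Real.exp (j + 2) - 1) ≤ 1 / 4)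
    (N : Ω → ℕ) (Ns : ℕ → Ω → ℕ) (μs : ℕ → ℝ) (hμ0 : ∀ j, 0 ≤ μs j)
    (hμ : ∀ j : ℕ, μs j ≤ l * r ^ (j + 1))
    (hmeasN : Measurable N) (hmeasNs : ∀ j, Measurable (Ns j))
    (hindep : iIndepFun
      (fun o : Option ℕ => o.elim N Ns) P)
    (hpoisN : ∀ k : ℕ, P {ω | N ω = k} =
      ENNReal.ofReal (Real.exp (-l) * l ^ k / (Nat.factorial k)))
    (hpoisNs : ∀ j k : ℕ, P {ω | Ns j ω = k} =
      ENNReal.ofReal (Real.exp (-μs j) * (μs j) ^ k / (Nat.factorial k))) :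
    P {ω | ∑' j : ℕ, ((j : ℝ) + 2) * (Ns j ω : ℝ) ≤ (N ω : ℝ)} ≥
      1 - ENNReal.ofReal (Real.exp (-l / 8)) - ENNReal.ofReal (Real.exp (-l / 4)) := by
  classical
  set X : ℕ → Ω → ℝ := fun j ω => ((j : ℝ) + 2) * (Ns j ω : ℝ) with hX
  have hexp1 : ∀ j : ℕ, (0 : ℝ) ≤ Real.exp ((j : ℝ) + 2) - 1 := by
    intro j
    have h1 : (1 : ℝ) ≤ Real.exp ((j : ℝ) + 2) := by
      rw [← Real.exp_zero]
      exact Real.exp_le_exp.2 (by positivity)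
    linarith
  have hterm0 : ∀ j : ℕ, (0 : ℝ) ≤ r ^ (j + 1) * (Real.exp (j + 2) - 1) := by
    intro j
    exact mul_nonneg (by positivity) (hexp1 j)
  have hre : r * Real.exp 1 < 1 := by
    have h := mul_lt_mul_of_pos_right hr1 (Real.exp_pos 1)
    rwa [← Real.exp_add, neg_add_cancel, Real.exp_zero] at h
  have hsummable : Summable fun j : ℕ => r ^ (j + 1) * (Real.exp (j + 2) - 1) := by
    refine Summable.of_nonneg_of_le hterm0 (fun j => ?_)
      ((summable_geometric_of_lt_one (by positivity) hre).mul_left (r * Real.exp 2))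
    have h1 : r ^ (j + 1) * (Real.exp ((j : ℝ) + 2) - 1)
        ≤ r ^ (j + 1) * Real.exp ((j : ℝ) + 2) :=
      mul_le_mul_of_nonneg_left (by linarith [hexp1 j]) (by positivity)
    refine h1.trans (le_of_eq ?_)
    rw [show ((j : ℝ) + 2) = (j : ℝ) * 1 + 2 by ring, Real.exp_add, Real.exp_nat_mul,
      pow_succ, mul_pow]
    ring
  have hpartial : ∀ n : ℕ,
      ∑ j ∈ Finset.range n, r ^ (j + 1) * (Real.exp (j + 2) - 1) ≤ 1 / 4 :=
    fun n => (Summable.sum_le_tsum (Finset.range n) (fun j _ => hterm0 j) hsummable).trans hrsum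
  -- independence
  have hNsIndep : iIndepFun Ns P := iIndepFun_of_option hindep
  have hXIndep : iIndepFun X P :=
    hNsIndep.comp (fun j (k : ℕ) => ((j : ℝ) + 2) * (k : ℝ)) (fun j => measurable_from_nat)
  have hXmeas : ∀ j, Measurable (X j) := fun j =>
    (measurable_from_nat (f := fun k : ℕ => ((j : ℝ) + 2) * (k : ℝ))).comp (hmeasNs j)
  have hXnonneg : ∀ j ω, 0 ≤ X j ω := fun j ω =>
    mul_nonneg (by positivity) (Nat.cast_nonneg _)
  have hexpX : ∀ j, (fun ω => Real.exp (1 * X j ω))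
      = fun ω => (Real.exp ((j : ℝ) + 2)) ^ (Ns j ω) := by
    intro j
    funext ω
    rw [one_mul]
    show Real.exp (((j : ℝ) + 2) * (Ns j ω : ℝ)) = _
    rw [mul_comm, Real.exp_nat_mul]
  have hXint : ∀ j, Integrable (fun ω => Real.exp (1 * X j ω)) P := by
    intro j
    rw [hexpX j]
    exact poisson_integrable P (Ns j) (hmeasNs j) (μs j) _ (hμ0 j)
      (Real.exp_nonneg _) (hpoisNs j)
  have hmgf : ∀ j, mgf (X j) P 1 = Real.exp (μs j * (Real.exp ((j : ℝ) + 2) - 1)) := by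
    intro j
    unfold mgf
    rw [hexpX j]
    exact poisson_integral P (Ns j) (hmeasNs j) (μs j) _ (hμ0 j)
      (Real.exp_nonneg _) (hpoisNs j)
  -- Chernoff bound on partial sums
  have hA : ∀ n : ℕ, P {ω | l / 2 ≤ (∑ j ∈ Finset.range n, X j) ω}
      ≤ ENNReal.ofReal (Real.exp (-l / 4)) := by
    intro n
    have hint : Integrable (fun ω => Real.exp (1 * (∑ j ∈ Finset.range n, X j) ω)) P :=
      hXIndep.integrable_exp_mul_sum hXmeas (fun j _ => hXint j)
    have h0 := measure_ge_le_exp_mul_mgf (μ := P) (X := ∑ j ∈ Finset.range n, X j)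
      (t := 1) (l / 2) zero_le_one hint
    have hmgfsum : mgf (∑ j ∈ Finset.range n, X j) P 1
        = ∏ j ∈ Finset.range n, mgf (X j) P 1 := hXIndep.mgf_sum hXmeas _
    have hprod : ∏ j ∈ Finset.range n, mgf (X j) P 1 ≤ Real.exp (l * (1 / 4)) := by
      calc ∏ j ∈ Finset.range n, mgf (X j) P 1
          = Real.exp (∑ j ∈ Finset.range n, μs j * (Real.exp ((j : ℝ) + 2) - 1)) := by
            rw [Real.exp_sum]
            exact Finset.prod_congr rfl fun j _ => hmgf j
        _ ≤ Real.exp (l * (1 / 4)) := by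
            apply Real.exp_le_exp.2
            calc ∑ j ∈ Finset.range n, μs j * (Real.exp ((j : ℝ) + 2) - 1)
                ≤ ∑ j ∈ Finset.range n, l * (r ^ (j + 1) * (Real.exp ((j : ℝ) + 2) - 1)) := by
                  refine Finset.sum_le_sum fun j _ => ?_
                  have := mul_le_mul_of_nonneg_right (hμ j) (hexp1 j)
                  linarith [this]
              _ = l * ∑ j ∈ Finset.range n, r ^ (j + 1) * (Real.exp ((j : ℝ) + 2) - 1) := by
                  rw [Finset.mul_sum]
              _ ≤ l * (1 / 4) := mul_le_mul_of_nonneg_left (hpartial n) hl.le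
    have hfin : (P {ω | l / 2 ≤ (∑ j ∈ Finset.range n, X j) ω}).toReal
        ≤ Real.exp (-l / 4) := by
      refine h0.trans ?_
      rw [hmgfsum]
      calc Real.exp (-1 * (l / 2)) * ∏ j ∈ Finset.range n, mgf (X j) P 1
          ≤ Real.exp (-1 * (l / 2)) * Real.exp (l * (1 / 4)) :=
            mul_le_mul_of_nonneg_left hprod (Real.exp_nonneg _)
        _ = Real.exp (-l / 4) := by rw [← Real.exp_add]; congr 1; ring
    rw [← ENNReal.ofReal_toReal (measure_ne_top P _)]
    exact ENNReal.ofReal_le_ofReal hfin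
  -- Poisson lower tail
  have hB1 : P {ω | (N ω : ℝ) < l / 2} ≤ ENNReal.ofReal (Real.exp (-l / 8)) := by
    set c : ℝ := Real.exp (-1) with hc
    have hcpos : 0 < c := Real.exp_pos _
    have hc38 : c ≤ 3 / 8 := by
      have hprodc : Real.exp (-1) * Real.exp 1 = 1 := by
        rw [← Real.exp_add]; norm_num
      have h9 := Real.exp_one_gt_d9
      nlinarith [Real.exp_pos (-1)]
    have hsubset : {ω | (N ω : ℝ) < l / 2}
        ⊆ {ω | ENNReal.ofReal (Real.exp (-(l / 2))) ≤ ENNReal.ofReal (c ^ N ω)} := by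
      intro ω hω
      simp only [Set.mem_setOf_eq] at hω ⊢
      apply ENNReal.ofReal_le_ofReal
      have hck : c ^ N ω = Real.exp (-(N ω : ℝ)) := by
        rw [hc, ← Real.exp_nat_mul]
        congr 1; ring
      rw [hck]
      exact Real.exp_le_exp.2 (by linarith)
    refine (measure_mono hsubset).trans ?_
    have hmark := meas_ge_le_lintegral_div (μ := P)
      (f := fun ω => ENNReal.ofReal (c ^ N ω))
      ((ENNReal.measurable_ofReal.comp
        ((measurable_from_nat (f := fun k : ℕ => c ^ k)).comp hmeasN)).aemeasurable)
      (ε := ENNReal.ofReal (Real.exp (-(l / 2))))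
      (ne_of_gt (ENNReal.ofReal_pos.2 (Real.exp_pos _))) ENNReal.ofReal_ne_top
    refine hmark.trans ?_
    rw [poisson_lintegral P N hmeasN l c hl.le hcpos.le hpoisN,
      ← ENNReal.ofReal_div_of_pos (Real.exp_pos _)]
    apply ENNReal.ofReal_le_ofReal
    rw [← Real.exp_sub]
    apply Real.exp_le_exp.2
    nlinarith [hc38, hl.le]
  -- assembling
  set A : ℕ → Set Ω := fun n => {ω | l / 2 ≤ (∑ j ∈ Finset.range n, X j) ω} with hAdef
  have hAmono : Monotone A := by
    intro m n hmn ω hω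
    simp only [hAdef, Set.mem_setOf_eq, Finset.sum_apply] at hω ⊢
    exact hω.trans (Finset.sum_le_sum_of_subset_of_nonneg (Finset.range_subset_range.2 hmn)
      (fun j _ _ => hXnonneg j ω))
  have hAmeas : ∀ n, MeasurableSet (A n) := by
    intro n
    have hrw : A n = {ω | l / 2 ≤ ∑ j ∈ Finset.range n, X j ω} := by
      ext ω; simp [hAdef, Finset.sum_apply]
    rw [hrw]
    exact measurableSet_le measurable_const (Finset.measurable_sum _ fun j _ => hXmeas j)
  have hB1meas : MeasurableSet {ω | (N ω : ℝ) < l / 2} :=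
    measurableSet_lt ((measurable_from_nat (f := fun k : ℕ => (k : ℝ))).comp hmeasN)
      measurable_const
  set B : Set Ω := {ω | (N ω : ℝ) < l / 2} ∪ ⋃ n, A n with hBdef
  have hBmeas : MeasurableSet B := hB1meas.union (MeasurableSet.iUnion hAmeas)
  have hsub : Bᶜ ⊆ {ω | ∑' j : ℕ, ((j : ℝ) + 2) * (Ns j ω : ℝ) ≤ (N ω : ℝ)} := by
    intro ω hω
    simp only [hBdef, hAdef, Set.compl_union, Set.mem_inter_iff, Set.mem_compl_iff,
      Set.mem_setOf_eq, Set.mem_iUnion, not_exists, not_lt, not_le, Set.compl_iUnion,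
      Set.mem_iInter, Finset.sum_apply] at hω
    obtain ⟨h1, h2⟩ := hω
    show ∑' j : ℕ, ((j : ℝ) + 2) * (Ns j ω : ℝ) ≤ (N ω : ℝ)
    by_cases hs : Summable (fun j : ℕ => ((j : ℝ) + 2) * (Ns j ω : ℝ))
    · have hts : ∑' j : ℕ, ((j : ℝ) + 2) * (Ns j ω : ℝ) ≤ l / 2 := by
        refine Summable.tsum_le_of_sum_le hs fun s => ?_
        obtain ⟨n, hn⟩ := s.exists_nat_subset_range
        refine (Finset.sum_le_sum_of_subset_of_nonneg hn fun j _ _ =>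
          mul_nonneg (by positivity) (Nat.cast_nonneg _)).trans ?_
        exact (h2 n).le
      linarith
    · rw [tsum_eq_zero_of_not_summable hs]
      positivity
  have hPB : P B ≤ ENNReal.ofReal (Real.exp (-l / 8)) + ENNReal.ofReal (Real.exp (-l / 4)) := by
    refine (measure_union_le _ _).trans ?_
    refine add_le_add hB1 ?_
    rw [(hAmono.directed_le).measure_iUnion]
    exact iSup_le hA
  have h3 : P Bᶜ ≤ P {ω | ∑' j : ℕ, ((j : ℝ) + 2) * (Ns j ω : ℝ) ≤ (N ω : ℝ)} :=
    measure_mono hsub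
  rw [prob_compl_eq_one_sub hBmeas] at h3
  calc 1 - ENNReal.ofReal (Real.exp (-l / 8)) - ENNReal.ofReal (Real.exp (-l / 4))
      = 1 - (ENNReal.ofReal (Real.exp (-l / 8)) + ENNReal.ofReal (Real.exp (-l / 4))) :=
        (tsub_add_eq_tsub_tsub _ _ _).symm
    _ ≤ 1 - P B := tsub_le_tsub_left hPB 1
    _ ≤ P {ω | ∑' j : ℕ, ((j : ℝ) + 2) * (Ns j ω : ℝ) ≤ (N ω : ℝ)} := h3
end
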